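/- For every integer m ≥ 3, if μ ∈ Opt(m), then μ̄(x) > 1.593/m for every x ∈ supp μ̄, and consequently |supp μ̄| < 1.256·m. -/

import Mathlib

open Finset

/-- The cyclic successor of an index in `Fin m`. -/
def cnext {m : ℕ} (i : Fin m) : Fin m := ⟨(i.1 + 1) % m, Nat.mod_lt _ i.pos⟩

/-- `μ` is a probability mass on the 2-element subsets of `X`: it is nonnegative,
vanishes on the diagonal, and has total mass 1. -/
def IsProbMass {X : Type*} [Fintype X] [DecidableEq X] (μ : Sym2 X → ℝ) : Prop :=
  (∀ e, 0 ≤ μ e) ∧ (∀ e : Sym2 X, e.IsDiag → μ e = 0) ∧ (∑ e : Sym2 X, μ e) = 1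

/-- The weight `μ(C)` of the labeled cycle `f 0, f 1, ..., f (m-1), f 0`. -/
def cycleWeight {X : Type*} (μ : Sym2 X → ℝ) {m : ℕ} (f : Fin m → X) : ℝ :=
  ∏ i : Fin m, μ s(f i, f (cnext i))

/-- `β(μ; m)`: the sum of `μ(C)` over all unlabeled `m`-cycles `C` in the complete
graph on `X`, computed as the sum over labeled cycles divided by `2m` (each unlabeled
`m`-cycle has exactly `2m` labelings). -/
noncomputable def beta {X : Type*} [Fintype X] [DecidableEq X] (μ : Sym2 X → ℝ) (m : ℕ) : ℝ :=
  (∑ f : Fin m → X, if Function.Injective f then cycleWeight μ f else 0) / (2 * m)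

/-- `β(m)`: the supremum of `β(μ; m)` over all probability masses `μ` on the
2-element subsets of a finite set (every finite set being a copy of some `Fin n`). -/
noncomputable def betaSup (m : ℕ) : ℝ :=
  sSup {b : ℝ | ∃ (n : ℕ) (μ : Sym2 (Fin n) → ℝ), IsProbMass μ ∧ b = beta μ m}

/-- The weighted degree `μ̄(x) = ∑_{y ≠ x} μ(xy)`. -/
noncomputable def wdeg {X : Type*} [Fintype X] [DecidableEq X] (μ : Sym2 X → ℝ) (x : X) : ℝ :=
  ∑ y ∈ Finset.univ.filter (· ≠ x), μ s(x, y)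

/-- The support graph `G_μ`, whose edges are the pairs of positive mass. -/
def supportGraph {X : Type*} (μ : Sym2 X → ℝ) : SimpleGraph X where
  Adj x y := x ≠ y ∧ 0 < μ s(x, y)
  symm := ⟨fun x y h => ⟨h.1.symm, by rw [Sym2.eq_swap]; exact h.2⟩⟩
  loopless := ⟨fun x h => h.1 rfl⟩

namespace OptAux

open Function

/- ### cnext arithmetic -/

def cprev {m : ℕ} (i : Fin m) : Fin m := ⟨(i.1 + (m - 1)) % m, Nat.mod_lt _ i.pos⟩

lemma cnext_val {m : ℕ} (i : Fin m) :
    (cnext i).1 = if i.1 + 1 = m then 0 else i.1 + 1 := by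
  have hi := i.isLt
  show (i.1 + 1) % m = _
  split_ifs with h
  · rw [h, Nat.mod_self]
  · exact Nat.mod_eq_of_lt (by omega)

lemma cprev_val {m : ℕ} (i : Fin m) :
    (cprev i).1 = if i.1 = 0 then m - 1 else i.1 - 1 := by
  have hi := i.isLt
  show (i.1 + (m - 1)) % m = _
  split_ifs with h
  · rw [h, Nat.zero_add]; exact Nat.mod_eq_of_lt (by omega)
  · have h2 : i.1 + (m - 1) = (i.1 - 1) + m := by omega
    rw [h2, Nat.add_mod_right]
    exact Nat.mod_eq_of_lt (by omega)

lemma cnext_cprev {m : ℕ} (i : Fin m) : cnext (cprev i) = i := by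
  have hi := i.isLt
  have hm0 := i.pos
  apply Fin.ext
  show ((i.1 + (m - 1)) % m + 1) % m = i.1
  rw [Nat.mod_add_mod]
  have h2 : i.1 + (m - 1) + 1 = i.1 + m := by omega
  rw [h2, Nat.add_mod_right]
  exact Nat.mod_eq_of_lt hi

lemma cprev_cnext {m : ℕ} (i : Fin m) : cprev (cnext i) = i := by
  have hi := i.isLt
  have hm0 := i.pos
  apply Fin.ext
  show ((i.1 + 1) % m + (m - 1)) % m = i.1
  rw [Nat.mod_add_mod]
  have h2 : i.1 + 1 + (m - 1) = i.1 + m := by omega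
  rw [h2, Nat.add_mod_right]
  exact Nat.mod_eq_of_lt hi

lemma cnext_injective {m : ℕ} : Function.Injective (cnext : Fin m → Fin m) :=
  Function.LeftInverse.injective cprev_cnext

lemma cnext_ne {m : ℕ} (hm : 2 ≤ m) (i : Fin m) : cnext i ≠ i := by
  have hi := i.isLt
  have hm0 := i.pos
  intro h
  have := congrArg Fin.val h
  rw [cnext_val] at this
  split_ifs at this <;> omega

lemma cnext_cnext_ne {m : ℕ} (hm : 3 ≤ m) (i : Fin m) : cnext (cnext i) ≠ i := by
  have hi := i.isLt
  have hm0 := i.pos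
  intro h
  have := congrArg Fin.val h
  rw [cnext_val, cnext_val] at this
  split_ifs at this <;> omega

variable {X : Type*} [Fintype X] [DecidableEq X]

/-- The `i`-th edge of the labeled cycle `f`. -/
def edg {m : ℕ} (f : Fin m → X) (i : Fin m) : Sym2 X := s(f i, f (cnext i))

/-- The (unnormalized) sum over labeled cycles. -/
noncomputable def S (μ : Sym2 X → ℝ) (m : ℕ) : ℝ :=
  ∑ f : Fin m → X, if Function.Injective f then ∏ i, μ (edg f i) else 0

lemma beta_eq (μ : Sym2 X → ℝ) (m : ℕ) : beta μ m = S μ m / (2 * m) := rfl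

/-- Sum over labeled cycles through a fixed vertex `x`. -/
noncomputable def Sx (μ : Sym2 X → ℝ) (m : ℕ) (x : X) : ℝ :=
  ∑ f : Fin m → X, if Function.Injective f ∧ x ∈ Finset.univ.image f then ∏ i, μ (edg f i) else 0

/-- The directional derivative of `S` with respect to the edge variable `c`. -/
noncomputable def Dc (μ : Sym2 X → ℝ) (m : ℕ) (c : Sym2 X) : ℝ :=
  ∑ f : Fin m → X, if Function.Injective f then
    (∑ i, if edg f i = c then ∏ j ∈ Finset.univ.erase i, μ (edg f j) else 0) else 0

section probmass
variable {μ : Sym2 X → ℝ} (hμ : IsProbMass μ)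
include hμ

lemma S_nonneg (m : ℕ) : 0 ≤ S μ m := by
  apply Finset.sum_nonneg
  intro f _
  split_ifs
  · exact Finset.prod_nonneg fun i _ => hμ.1 _
  · exact le_refl _

/-- Double counting: summing `μ` over ordered pairs gives `2`. -/
lemma sum_mk : ∑ p : X × X, μ (Sym2.mk p.1 p.2) = 2 := by
  have h := Finset.sum_fiberwise' (univ : Finset (X × X)) (fun p : X × X => Sym2.mk p.1 p.2) μ
  rw [← h]
  have key : ∀ e : Sym2 X, ∑ _p ∈ univ.filter (fun p : X × X => Sym2.mk p.1 p.2 = e), μ e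
      = 2 * μ e := by
    intro e
    induction e using Sym2.inductionOn with
    | hf a b =>
      rw [Finset.sum_const]
      by_cases hab : a = b
      · subst hab
        have h0 : μ s(a, a) = 0 := hμ.2.1 _ (by simp)
        rw [h0, smul_zero, mul_zero]
      · have hcard : univ.filter (fun p : X × X => Sym2.mk p.1 p.2 = s(a, b))
            = ({(a, b), (b, a)} : Finset (X × X)) := by
          ext ⟨u, v⟩
          simp only [Finset.mem_filter, Finset.mem_univ, true_and, Finset.mem_insert,
            Finset.mem_singleton, Sym2.eq_iff, Prod.mk.injEq, Prod.swap_prod_mk]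
        rw [hcard]
        rw [Finset.card_insert_of_notMem (by simp [hab]), Finset.card_singleton]
        push_cast [smul_eq_mul]
        ring
  rw [Finset.sum_congr rfl (fun e _ => key e), ← Finset.mul_sum, hμ.2.2, mul_one]

/-- `wdeg` is the sum of `μ` over the edges containing `x`. -/
lemma wdeg_eq' (x : X) : wdeg μ x = ∑ y : X, μ s(x, y) := by
  have h := Finset.sum_filter_add_sum_filter_not (univ : Finset X) (· ≠ x)
    (fun y => μ s(x, y))
  rw [wdeg, ← h, left_eq_add]
  have h1 : univ.filter (fun y : X => ¬ y ≠ x) = {x} := by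
    ext y; simp
  rw [h1, Finset.sum_singleton]
  exact hμ.2.1 s(x, x) (by simp)

lemma wdeg_eq (x : X) : wdeg μ x = ∑ e ∈ Finset.univ.filter (fun e : Sym2 X => x ∈ e), μ e := by
  rw [wdeg_eq' hμ]
  have himg : Finset.univ.filter (fun e : Sym2 X => x ∈ e)
      = Finset.univ.image (fun y : X => s(x, y)) := by
    ext e
    rw [Finset.mem_filter, Finset.mem_image]
    simp only [Finset.mem_univ, true_and, exists_prop]
    rw [Sym2.mem_iff_exists]
    constructor
    · rintro ⟨b, rfl⟩; exact ⟨b, rfl⟩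
    · rintro ⟨b, rfl⟩; exact ⟨b, rfl⟩
  rw [himg, Finset.sum_image (fun y _ z _ h => Sym2.congr_right.mp h)]

lemma sum_wdeg : ∑ x : X, wdeg μ x = 2 := by
  rw [Finset.sum_congr rfl (fun x _ => wdeg_eq' hμ x)]
  have h2 := Fintype.sum_prod_type' (f := fun (a b : X) => μ s(a, b))
  rw [← h2]
  exact sum_mk hμ

lemma wdeg_nonneg (x : X) : 0 ≤ wdeg μ x := by
  exact Finset.sum_nonneg fun y _ => hμ.1 _

lemma S_le (m : ℕ) : S μ m ≤ 2 ^ m := by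
  have h1 : S μ m ≤ ∑ f : Fin m → X, ∏ i, μ (edg f i) := by
    apply Finset.sum_le_sum
    intro f _
    split_ifs
    · exact le_refl _
    · exact Finset.prod_nonneg fun i _ => hμ.1 _
  have h2 : ∑ f : Fin m → X, ∏ i, μ (edg f i)
      ≤ ∑ q : Fin m → X × X, ∏ i, μ (Sym2.mk (q i).1 (q i).2) := by
    have hinj : ∀ f ∈ (univ : Finset (Fin m → X)), ∀ g ∈ (univ : Finset (Fin m → X)),
        ((fun f : Fin m → X => fun i => (f i, f (cnext i))) f
          = (fun f : Fin m → X => fun i => (f i, f (cnext i))) g) → f = g :=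
      fun f _ g _ h => funext fun i => congrArg Prod.fst (congrFun h i)
    have key : (∑ q ∈ (univ : Finset (Fin m → X)).image
          (fun f : Fin m → X => fun i => (f i, f (cnext i))),
          ∏ i, μ (Sym2.mk (q i).1 (q i).2))
        = ∑ f : Fin m → X, ∏ i, μ (edg f i) := Finset.sum_image hinj
    rw [← key]
    apply Finset.sum_le_sum_of_subset_of_nonneg (Finset.subset_univ _)
    exact fun q _ _ => Finset.prod_nonneg fun i _ => hμ.1 _
  have h3 : ∑ q : Fin m → X × X, ∏ i, μ (Sym2.mk (q i).1 (q i).2) = 2 ^ m := by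
    rw [← Fintype.sum_pow (fun p : X × X => μ (Sym2.mk p.1 p.2)) m, sum_mk hμ]
  calc S μ m ≤ _ := h1
    _ ≤ _ := h2
    _ = _ := h3

end probmass

lemma betaSup_bddAbove (m : ℕ) (hm : 1 ≤ m) :
    BddAbove {b : ℝ | ∃ (n : ℕ) (μ : Sym2 (Fin n) → ℝ), IsProbMass μ ∧ b = beta μ m} := by
  refine ⟨(2 : ℝ) ^ m, ?_⟩
  rintro b ⟨n, ν, hν, rfl⟩
  rw [beta_eq]
  have hS : S ν m ≤ 2 ^ m := S_le hν m
  have h0 : (0 : ℝ) ≤ S ν m := S_nonneg hν m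
  have h1 : (1 : ℝ) ≤ 2 * m := by
    have : (1 : ℝ) ≤ (m : ℝ) := by exact_mod_cast hm
    nlinarith
  exact (div_le_self h0 h1).trans hS

lemma beta_transport (m : ℕ) {μ : Sym2 X → ℝ} (hμ : IsProbMass μ) :
    ∃ μ' : Sym2 (Fin (Fintype.card X)) → ℝ, IsProbMass μ' ∧ beta μ' m = beta μ m := by
  set ψ : Fin (Fintype.card X) ≃ X := (Fintype.equivFin X).symm with hψ
  refine ⟨fun e => μ (Sym2.map ψ e), ⟨fun e => hμ.1 _, ?_, ?_⟩, ?_⟩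
  · intro e he
    exact hμ.2.1 _ ((Sym2.isDiag_map ψ.injective).mpr he)
  · have hbij : Function.Bijective (Sym2.map ⇑ψ : Sym2 (Fin (Fintype.card X)) → Sym2 X) := by
      constructor
      · exact Sym2.map.injective ψ.injective
      · intro e'
        refine ⟨Sym2.map ⇑ψ.symm e', ?_⟩
        rw [Sym2.map_map]
        have h1 : (⇑ψ ∘ ⇑ψ.symm) = id := funext fun y => ψ.apply_symm_apply y
        rw [h1, Sym2.map_id, id_eq]
    rw [Fintype.sum_bijective (Sym2.map ⇑ψ) hbij _ μ (fun e => rfl)]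
    exact hμ.2.2
  · rw [beta_eq, beta_eq]
    congr 1
    have hbijF : Function.Bijective (fun f : Fin m → Fin (Fintype.card X) => ⇑ψ ∘ f) :=
      ⟨fun f g h => funext fun i => ψ.injective (congrFun h i),
       fun g => ⟨⇑ψ.symm ∘ g, funext fun i => ψ.apply_symm_apply (g i)⟩⟩
    refine Fintype.sum_bijective _ hbijF _ _ ?_
    intro f
    by_cases hf : Function.Injective f
    · have hf' : Function.Injective (⇑ψ ∘ f) := ψ.injective.comp hf
      rw [if_pos hf, if_pos hf']
      refine Finset.prod_congr rfl fun i _ => ?_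
      show μ (Sym2.map ⇑ψ s(f i, f (cnext i))) = μ s((⇑ψ ∘ f) i, (⇑ψ ∘ f) (cnext i))
      rw [Sym2.map_pair_eq]
      rfl
    · have hf' : ¬ Function.Injective (⇑ψ ∘ f) := fun h =>
        hf (fun a b hab => h (congrArg ⇑ψ hab))
      rw [if_neg hf, if_neg hf']

lemma beta_le_betaSup (m : ℕ) (hm : 1 ≤ m) {μ : Sym2 X → ℝ} (hμ : IsProbMass μ) :
    beta μ m ≤ betaSup m := by
  obtain ⟨μ', hμ', heq⟩ := beta_transport m hμ
  rw [← heq, betaSup]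
  exact le_csSup (betaSup_bddAbove m hm) ⟨_, μ', hμ', rfl⟩

lemma S_pos (m : ℕ) (hm : 3 ≤ m) {μ : Sym2 X → ℝ} (hμ : IsProbMass μ)
    (hopt : beta μ m = betaSup m) : 0 < S μ m := by
  have hm0 : 0 < m := by omega
  have hmR : (0 : ℝ) < m := by exact_mod_cast hm0
  set t : Finset (Sym2 (Fin m)) := (Finset.univ : Finset (Fin m)).image (fun i => s(i, cnext i))
    with ht
  set μ₀ : Sym2 (Fin m) → ℝ := fun e => if e ∈ t then (m : ℝ)⁻¹ else 0 with hμ₀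
  have hcard : t.card = m := by
    rw [ht, Finset.card_image_of_injOn, Finset.card_univ, Fintype.card_fin]
    intro i _ j _ h
    rw [Sym2.eq_iff] at h
    rcases h with ⟨h1, -⟩ | ⟨h1, h2⟩
    · exact h1
    · exfalso
      have hcc : cnext (cnext j) = j := by rw [← h1, h2]
      exact cnext_cnext_ne hm j hcc
  have hprob : IsProbMass μ₀ := by
    refine ⟨fun e => ?_, fun e he => ?_, ?_⟩
    · rw [hμ₀]; dsimp only; split_ifs
      · positivity
      · exact le_refl _
    · have hne : e ∉ t := by
        intro hmem
        rw [ht, Finset.mem_image] at hmem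
        obtain ⟨i, -, rfl⟩ := hmem
        rw [Sym2.mk_isDiag_iff] at he
        exact cnext_ne (by omega) i he.symm
      rw [hμ₀]; dsimp only; rw [if_neg hne]
    · rw [hμ₀]; dsimp only
      rw [Finset.sum_ite_mem, Finset.univ_inter, Finset.sum_const, hcard, nsmul_eq_mul]
      exact mul_inv_cancel₀ (ne_of_gt hmR)
  have hid : (if Function.Injective (fun i : Fin m => i) then
      ∏ i, μ₀ (edg (fun i : Fin m => i) i) else 0) = ((m : ℝ)⁻¹) ^ m := by
    have hI : Function.Injective (fun i : Fin m => i) := fun a b h => h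
    rw [if_pos hI]
    have each : ∀ i : Fin m, μ₀ (edg (fun j : Fin m => j) i) = (m : ℝ)⁻¹ := by
      intro i
      show μ₀ s(i, cnext i) = (m : ℝ)⁻¹
      rw [hμ₀]; dsimp only
      rw [if_pos (Finset.mem_image_of_mem _ (Finset.mem_univ i))]
    rw [Finset.prod_congr rfl fun i _ => each i, Finset.prod_const, Finset.card_univ,
      Fintype.card_fin]
  have hS0 : ((m : ℝ)⁻¹) ^ m ≤ S μ₀ m := by
    rw [← hid]
    refine Finset.single_le_sum (f := fun f : Fin m → Fin m =>
      if Function.Injective f then ∏ i, μ₀ (edg f i) else 0) ?_ (Finset.mem_univ _)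
    intro f _
    split_ifs
    · exact Finset.prod_nonneg fun i _ => hprob.1 _
    · exact le_refl _
  have hpos : 0 < beta μ₀ m := by
    rw [beta_eq]
    refine div_pos (lt_of_lt_of_le (by positivity) hS0) (by positivity)
  have hle : beta μ₀ m ≤ betaSup m :=
    le_csSup (betaSup_bddAbove m (by omega)) ⟨m, μ₀, hprob, rfl⟩
  have h2 : 0 < beta μ m := lt_of_lt_of_le hpos (hle.trans_eq hopt.symm)
  rw [beta_eq] at h2
  rcases div_pos_iff.mp h2 with ⟨h3, -⟩ | ⟨-, h4⟩
  · exact h3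
  · exfalso; nlinarith

/-- Derivative of the perturbed cycle-sum. -/
lemma hasDerivAt_S (μ w : Sym2 X → ℝ) (m : ℕ) :
    HasDerivAt (fun t : ℝ => S (fun e => μ e + t * w e) m)
      (∑ f : Fin m → X, if Function.Injective f then
        (∑ i, w (edg f i) * ∏ j ∈ Finset.univ.erase i, μ (edg f j)) else 0) 0 := by
  have key : ∀ f : Fin m → X, HasDerivAt
      (fun t : ℝ => if Function.Injective f then ∏ i, (μ (edg f i) + t * w (edg f i)) else 0)
      (if Function.Injective f then
        (∑ i, w (edg f i) * ∏ j ∈ Finset.univ.erase i, μ (edg f j)) else 0) 0 := by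
    intro f
    by_cases hf : Function.Injective f
    · simp only [if_pos hf]
      have h1 : ∀ i ∈ (univ : Finset (Fin m)),
          HasDerivAt (fun t : ℝ => μ (edg f i) + t * w (edg f i)) (w (edg f i)) 0 := by
        intro i _
        simpa using ((hasDerivAt_id (0:ℝ)).mul_const (w (edg f i))).const_add (μ (edg f i))
      have h2 := HasDerivAt.fun_finsetProd h1
      have h3 : (∑ i, (∏ j ∈ univ.erase i, (μ (edg f j) + 0 * w (edg f j))) • w (edg f i))
          = ∑ i, w (edg f i) * ∏ j ∈ Finset.univ.erase i, μ (edg f j) := by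
        apply Finset.sum_congr rfl
        intro i _
        rw [smul_eq_mul, mul_comm]
        congr 1
        exact Finset.prod_congr rfl fun j _ => by ring
      rw [h3] at h2
      exact h2
    · simp only [if_neg hf]
      exact hasDerivAt_const 0 0
  exact HasDerivAt.fun_sum (fun f (_ : f ∈ univ) => key f)

/-- KKT: at an optimum, the derivative toward any edge is at most that of a support edge. -/
lemma kkt (m : ℕ) (hm : 3 ≤ m) {μ : Sym2 X → ℝ} (hμ : IsProbMass μ)
    (hopt : beta μ m = betaSup m) {a b : Sym2 X} (ha : 0 < μ a) (hb : ¬ b.IsDiag) :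
    Dc μ m b ≤ Dc μ m a := by
  by_cases hab : a = b
  · subst hab; exact le_refl _
  have haD : ¬ a.IsDiag := fun h => by have := hμ.2.1 a h; linarith
  set w : Sym2 X → ℝ := fun e => (if e = b then 1 else 0) - (if e = a then 1 else 0) with hw
  have hprob : ∀ t ∈ Set.Ioc (0:ℝ) (μ a), IsProbMass (fun e => μ e + t * w e) := by
    intro t ht
    refine ⟨?_, ?_, ?_⟩
    · intro e
      rw [hw]; dsimp only
      by_cases h1 : e = b
      · subst h1
        rw [if_pos rfl, if_neg (fun h => hab h.symm)]
        have := hμ.1 e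
        have := ht.1
        nlinarith
      · rw [if_neg h1]
        by_cases h2 : e = a
        · subst h2
          rw [if_pos rfl]
          have := ht.2
          nlinarith
        · rw [if_neg h2]
          have := hμ.1 e
          nlinarith
    · intro e he
      have h1 : e ≠ b := fun h => hb (h ▸ he)
      have h2 : e ≠ a := fun h => haD (h ▸ he)
      rw [hw]; dsimp only
      rw [if_neg h1, if_neg h2, hμ.2.1 e he]
      ring
    · have hsw : ∑ e : Sym2 X, w e = 0 := by
        rw [hw]; dsimp only
        rw [Finset.sum_sub_distrib, Finset.sum_ite_eq' univ b (fun _ => (1:ℝ)),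
          Finset.sum_ite_eq' univ a (fun _ => (1:ℝ))]
        simp
      rw [Finset.sum_add_distrib, hμ.2.2, ← Finset.mul_sum, hsw, mul_zero, add_zero]
  have hD := (hasDerivAt_S μ w m).div_const (2*(m:ℝ))
  set D : ℝ := ∑ f : Fin m → X, if Function.Injective f then
    (∑ i, w (edg f i) * ∏ j ∈ Finset.univ.erase i, μ (edg f j)) else 0 with hDdef
  have hφ0 : (fun e : Sym2 X => μ e + 0 * w e) = μ := funext fun e => by ring
  have hquot : D / (2*(m:ℝ)) ≤ 0 := by
    have hslope := hasDerivAt_iff_tendsto_slope.mp hD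
    have hmono : (nhdsWithin (0:ℝ) (Set.Ioi 0)) ≤ (nhdsWithin (0:ℝ) {(0:ℝ)}ᶜ) :=
      nhdsWithin_mono 0 (fun x hx => ne_of_gt hx)
    have hev : ∀ᶠ t in nhdsWithin (0:ℝ) (Set.Ioi 0),
        slope (fun t : ℝ => S (fun e => μ e + t * w e) m / (2*(m:ℝ))) 0 t ≤ 0 := by
      filter_upwards [Ioc_mem_nhdsGT_of_mem (Set.mem_Ico.mpr ⟨le_refl _, ha⟩)] with t ht
      rw [slope_def_field]
      apply div_nonpos_of_nonpos_of_nonneg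
      · rw [sub_nonpos]
        have h1 : beta (fun e => μ e + t * w e) m ≤ betaSup m :=
          beta_le_betaSup m (by omega) (hprob t ht)
        rw [hopt.symm] at h1
        rw [beta_eq, beta_eq] at h1
        have h2 : S (fun e => μ e + (0:ℝ) * w e) m = S μ m := by rw [hφ0]
        rw [h2]
        exact h1
      · simp only [sub_zero]
        exact le_of_lt ht.1
    exact le_of_tendsto (hslope.mono_left hmono) hev
  have hden : (0:ℝ) < 2*(m:ℝ) := by
    have : (0:ℝ) < (m:ℝ) := by exact_mod_cast (by omega : 0 < m)
    linarith
  have hDle : D ≤ 0 := by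
    have h2 : D = D / (2*(m:ℝ)) * (2*(m:ℝ)) := (div_mul_cancel₀ _ (ne_of_gt hden)).symm
    rw [h2]
    exact mul_nonpos_of_nonpos_of_nonneg hquot (le_of_lt hden)
  have hDeq : D = Dc μ m b - Dc μ m a := by
    rw [hDdef, Dc, Dc, ← Finset.sum_sub_distrib]
    apply Finset.sum_congr rfl
    intro f _
    by_cases hf : Function.Injective f
    · rw [if_pos hf, if_pos hf, if_pos hf, ← Finset.sum_sub_distrib]
      apply Finset.sum_congr rfl
      intro i _
      rw [hw]; dsimp only
      split_ifs <;> ring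
    · rw [if_neg hf, if_neg hf, if_neg hf]
      ring
  rw [hDeq] at hDle
  linarith

/-- Euler identity. -/
lemma euler (m : ℕ) {μ : Sym2 X → ℝ} :
    ∑ c : Sym2 X, μ c * Dc μ m c = m * S μ m := by
  have key : ∀ f : Fin m → X,
      (∑ c : Sym2 X, if Function.Injective f then
        (∑ i, if edg f i = c then μ c * ∏ j ∈ Finset.univ.erase i, μ (edg f j) else 0) else 0)
      = (m : ℝ) * (if Function.Injective f then ∏ i, μ (edg f i) else 0) := by
    intro f
    by_cases hf : Function.Injective f
    · simp only [if_pos hf]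
      rw [Finset.sum_comm]
      have inner : ∀ i : Fin m,
          (∑ c : Sym2 X, if edg f i = c then μ c * ∏ j ∈ Finset.univ.erase i, μ (edg f j) else 0)
          = ∏ j, μ (edg f j) := by
        intro i
        rw [Finset.sum_ite_eq univ (edg f i)
          (fun c => μ c * ∏ j ∈ Finset.univ.erase i, μ (edg f j)), if_pos (Finset.mem_univ _)]
        exact Finset.mul_prod_erase univ (fun j => μ (edg f j)) (Finset.mem_univ i)
      rw [Finset.sum_congr rfl fun i _ => inner i, Finset.sum_const, Finset.card_univ,
        Fintype.card_fin, nsmul_eq_mul]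
    · simp [hf]
  calc ∑ c : Sym2 X, μ c * Dc μ m c
      = ∑ c : Sym2 X, ∑ f : Fin m → X, (if Function.Injective f then
          (∑ i, if edg f i = c then μ c * ∏ j ∈ Finset.univ.erase i, μ (edg f j) else 0) else 0) := by
        apply Finset.sum_congr rfl
        intro c _
        rw [Dc, Finset.mul_sum]
        apply Finset.sum_congr rfl
        intro f _
        by_cases hf : Function.Injective f
        · rw [if_pos hf, if_pos hf, Finset.mul_sum]
          apply Finset.sum_congr rfl
          intro i _
          rw [mul_ite, mul_zero]
        · rw [if_neg hf, if_neg hf, mul_zero]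
    _ = ∑ f : Fin m → X, ∑ c : Sym2 X, (if Function.Injective f then
          (∑ i, if edg f i = c then μ c * ∏ j ∈ Finset.univ.erase i, μ (edg f j) else 0) else 0) :=
        Finset.sum_comm
    _ = ∑ f : Fin m → X, (m : ℝ) * (if Function.Injective f then ∏ i, μ (edg f i) else 0) :=
        Finset.sum_congr rfl fun f _ => key f
    _ = m * S μ m := by rw [S, Finset.mul_sum]

/-- On the support, `Dc` is constantly `m * S`. -/
lemma Dc_support (m : ℕ) (hm : 3 ≤ m) {μ : Sym2 X → ℝ} (hμ : IsProbMass μ)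
    (hopt : beta μ m = betaSup m) {c : Sym2 X} (hc : 0 < μ c) :
    Dc μ m c = m * S μ m := by
  obtain ⟨a₀, ha₀⟩ : ∃ a₀ : Sym2 X, 0 < μ a₀ := ⟨c, hc⟩
  have hall : ∀ c' : Sym2 X, 0 < μ c' → Dc μ m c' = Dc μ m a₀ := by
    intro c' hc'
    have h1 : ¬ (Sym2.IsDiag c') := fun h => by have := hμ.2.1 c' h; linarith
    have h2 : ¬ (Sym2.IsDiag a₀) := fun h => by have := hμ.2.1 a₀ h; linarith
    exact le_antisymm (kkt m hm hμ hopt ha₀ h1) (kkt m hm hμ hopt hc' h2)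
  have heuler := euler (μ := μ) (X := X) m
  have hsum : ∑ c' : Sym2 X, μ c' * Dc μ m c' = Dc μ m a₀ := by
    have step : ∀ c' : Sym2 X, μ c' * Dc μ m c' = μ c' * Dc μ m a₀ := by
      intro c'
      rcases eq_or_lt_of_le (hμ.1 c') with h | h
      · rw [← h, zero_mul, zero_mul]
      · rw [hall c' h]
    rw [Finset.sum_congr rfl fun c' _ => step c', ← Finset.sum_mul, hμ.2.2, one_mul]
  rw [hsum] at heuler
  rw [hall c hc, heuler]

/-- Counting the two edges at a vertex of a cycle. -/
lemma count_edges {m : ℕ} (hm : 3 ≤ m) {f : Fin m → X} (hf : Function.Injective f)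
    (x : X) (P : ℝ) :
    (∑ i : Fin m, if x ∈ edg f i then P else 0)
      = (if x ∈ Finset.univ.image f then 2 * P else 0) := by
  by_cases hx : x ∈ Finset.univ.image f
  · rw [if_pos hx]
    obtain ⟨i₀, -, hi₀⟩ := Finset.mem_image.mp hx
    have hfilter : univ.filter (fun i : Fin m => x ∈ edg f i) = {i₀, cprev i₀} := by
      ext i
      rw [Finset.mem_filter, Finset.mem_insert, Finset.mem_singleton]
      simp only [Finset.mem_univ, true_and]
      rw [edg, Sym2.mem_iff]
      subst hi₀
      constructor
      · rintro (h | h)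
        · exact Or.inl (hf h).symm
        · right
          have hcn : cnext i = i₀ := (hf h).symm
          rw [← hcn, cprev_cnext]
      · rintro (rfl | rfl)
        · exact Or.inl rfl
        · right
          rw [cnext_cprev]
    have hne : i₀ ≠ cprev i₀ := by
      intro h
      have h2 : cnext i₀ = i₀ := by
        conv_lhs => rw [h]
        exact cnext_cprev i₀
      exact cnext_ne (by omega) i₀ h2
    rw [← Finset.sum_filter, hfilter, Finset.sum_insert (by simp [hne]), Finset.sum_singleton]
    ring
  · rw [if_neg hx]
    apply Finset.sum_eq_zero
    intro i _
    rw [if_neg]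
    intro hxe
    apply hx
    rw [edg, Sym2.mem_iff] at hxe
    rcases hxe with h | h
    · exact Finset.mem_image.mpr ⟨i, Finset.mem_univ _, h.symm⟩
    · exact Finset.mem_image.mpr ⟨cnext i, Finset.mem_univ _, h.symm⟩

/-- Vertex identity: `∑_{c ∋ x} μ(c) · Dc(c) = 2 Sx`. -/
lemma vertex_identity (m : ℕ) (hm : 3 ≤ m) {μ : Sym2 X → ℝ} (hμ : IsProbMass μ) (x : X) :
    ∑ c ∈ Finset.univ.filter (fun c : Sym2 X => x ∈ c), μ c * Dc μ m c = 2 * Sx μ m x := by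
  have key : ∀ f : Fin m → X, Function.Injective f →
      (∑ c ∈ Finset.univ.filter (fun c : Sym2 X => x ∈ c),
        (∑ i, if edg f i = c then μ c * ∏ j ∈ Finset.univ.erase i, μ (edg f j) else 0))
      = (if x ∈ Finset.univ.image f then 2 * ∏ i, μ (edg f i) else 0) := by
    intro f hf
    rw [Finset.sum_comm]
    have inner : ∀ i : Fin m,
        (∑ c ∈ Finset.univ.filter (fun c : Sym2 X => x ∈ c),
          if edg f i = c then μ c * ∏ j ∈ Finset.univ.erase i, μ (edg f j) else 0)
        = (if x ∈ edg f i then ∏ j, μ (edg f j) else 0) := by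
      intro i
      rw [Finset.sum_ite_eq (Finset.univ.filter (fun c : Sym2 X => x ∈ c)) (edg f i)
        (fun c => μ c * ∏ j ∈ Finset.univ.erase i, μ (edg f j))]
      by_cases hxi : x ∈ edg f i
      · have hmem : edg f i ∈ Finset.univ.filter (fun c : Sym2 X => x ∈ c) :=
          Finset.mem_filter.mpr ⟨Finset.mem_univ _, hxi⟩
        rw [if_pos hmem, if_pos hxi]
        exact Finset.mul_prod_erase univ (fun j => μ (edg f j)) (Finset.mem_univ i)
      · have hmem : edg f i ∉ Finset.univ.filter (fun c : Sym2 X => x ∈ c) :=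
          fun h => hxi (Finset.mem_filter.mp h).2
        rw [if_neg hmem, if_neg hxi]
    rw [Finset.sum_congr rfl fun i _ => inner i]
    exact count_edges hm hf x _
  calc ∑ c ∈ Finset.univ.filter (fun c : Sym2 X => x ∈ c), μ c * Dc μ m c
      = ∑ c ∈ Finset.univ.filter (fun c : Sym2 X => x ∈ c), ∑ f : Fin m → X,
          (if Function.Injective f then
            (∑ i, if edg f i = c then μ c * ∏ j ∈ Finset.univ.erase i, μ (edg f j) else 0)
          else 0) := by
        apply Finset.sum_congr rfl
        intro c _
        rw [Dc, Finset.mul_sum]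
        apply Finset.sum_congr rfl
        intro f _
        by_cases hf : Function.Injective f
        · rw [if_pos hf, if_pos hf, Finset.mul_sum]
          exact Finset.sum_congr rfl fun i _ => by rw [mul_ite, mul_zero]
        · rw [if_neg hf, if_neg hf, mul_zero]
    _ = ∑ f : Fin m → X, ∑ c ∈ Finset.univ.filter (fun c : Sym2 X => x ∈ c),
          (if Function.Injective f then
            (∑ i, if edg f i = c then μ c * ∏ j ∈ Finset.univ.erase i, μ (edg f j) else 0)
          else 0) := Finset.sum_comm
    _ = 2 * Sx μ m x := by
        rw [Sx, Finset.mul_sum]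
        apply Finset.sum_congr rfl
        intro f _
        by_cases hf : Function.Injective f
        · rw [Finset.sum_congr rfl (fun c (_ : c ∈ Finset.univ.filter
            (fun c : Sym2 X => x ∈ c)) => if_pos hf), key f hf]
          by_cases hx2 : x ∈ Finset.univ.image f
          · rw [if_pos hx2, if_pos ⟨hf, hx2⟩]
          · rw [if_neg hx2, if_neg (fun h => hx2 h.2), mul_zero]
        · rw [Finset.sum_congr rfl (fun c (_ : c ∈ Finset.univ.filter
            (fun c : Sym2 X => x ∈ c)) => if_neg hf)]
          rw [if_neg (fun h => hf h.1), Finset.sum_const, smul_zero, mul_zero]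

/-- Combining: `2 Sx = m · S · wdeg x`. -/
lemma Sx_eq (m : ℕ) (hm : 3 ≤ m) {μ : Sym2 X → ℝ} (hμ : IsProbMass μ)
    (hopt : beta μ m = betaSup m) (x : X) :
    2 * Sx μ m x = m * S μ m * wdeg μ x := by
  rw [← vertex_identity m hm hμ x, wdeg_eq hμ x, Finset.mul_sum]
  apply Finset.sum_congr rfl
  intro c _
  rcases eq_or_lt_of_le (hμ.1 c) with h | h
  · rw [← h, zero_mul, mul_zero]
  · rw [Dc_support m hm hμ hopt h]
    ring

/-- Deletion: removing `x` and rescaling. -/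
lemma deletion (m : ℕ) (hm : 3 ≤ m) {μ : Sym2 X → ℝ} (hμ : IsProbMass μ)
    (hopt : beta μ m = betaSup m) (x : X) (hd : wdeg μ x < 1) :
    S μ m - Sx μ m x ≤ (1 - wdeg μ x) ^ m * S μ m := by
  set d := wdeg μ x with hd'
  have hd0 : 0 ≤ d := wdeg_nonneg hμ x
  have h1d : 0 < 1 - d := by linarith
  set μ' : Sym2 X → ℝ := fun e => if x ∈ e then 0 else μ e / (1 - d) with hμ'
  have hsum_x : ∑ e ∈ univ.filter (fun e : Sym2 X => x ∈ e), μ e = d := (wdeg_eq hμ x).symm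
  have hprob : IsProbMass μ' := by
    refine ⟨?_, ?_, ?_⟩
    · intro e
      rw [hμ']; dsimp only
      split_ifs
      · exact le_refl _
      · exact div_nonneg (hμ.1 e) (le_of_lt h1d)
    · intro e he
      rw [hμ']; dsimp only
      split_ifs
      · rfl
      · rw [hμ.2.1 e he, zero_div]
    · rw [hμ']; dsimp only
      rw [Finset.sum_ite, Finset.sum_const, smul_zero, zero_add, ← Finset.sum_div]
      have hnot : ∑ e ∈ univ.filter (fun e : Sym2 X => ¬ x ∈ e), μ e = 1 - d := by
        have htot := Finset.sum_filter_add_sum_filter_not (univ : Finset (Sym2 X))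
          (fun e : Sym2 X => x ∈ e) μ
        rw [hμ.2.2] at htot
        linarith [hsum_x, htot]
      rw [hnot]
      field_simp
  have hS' : S μ' m = (S μ m - Sx μ m x) / (1 - d) ^ m := by
    rw [S, S, Sx, ← Finset.sum_sub_distrib, Finset.sum_div]
    apply Finset.sum_congr rfl
    intro f _
    by_cases hf : Function.Injective f
    · by_cases hx : x ∈ univ.image f
      · obtain ⟨i₀, -, hi₀⟩ := Finset.mem_image.mp hx
        have hz : μ' (edg f i₀) = 0 := by
          rw [hμ']; dsimp only
          rw [if_pos]
          rw [edg, Sym2.mem_iff]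
          exact Or.inl hi₀.symm
        have hmem2 : Function.Injective f ∧ x ∈ univ.image f := ⟨hf, hx⟩
        rw [if_pos hf, if_pos hf, if_pos hmem2,
          Finset.prod_eq_zero (Finset.mem_univ i₀) hz, sub_self, zero_div]
      · have hne : ∀ i, x ∉ edg f i := by
          intro i hxe
          apply hx
          rw [edg, Sym2.mem_iff] at hxe
          rcases hxe with h | h
          · exact Finset.mem_image.mpr ⟨i, Finset.mem_univ _, h.symm⟩
          · exact Finset.mem_image.mpr ⟨cnext i, Finset.mem_univ _, h.symm⟩
        have hmem2 : ¬ (Function.Injective f ∧ x ∈ univ.image f) := fun h => hx h.2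
        rw [if_pos hf, if_pos hf, if_neg hmem2, sub_zero]
        calc ∏ i, μ' (edg f i) = ∏ i, μ (edg f i) / (1 - d) :=
              Finset.prod_congr rfl fun i _ => by
                rw [hμ']; dsimp only; rw [if_neg (hne i)]
          _ = (∏ i, μ (edg f i)) / (1 - d) ^ m := by
              rw [Finset.prod_div_distrib, Finset.prod_const, Finset.card_univ,
                Fintype.card_fin]
    · have hmem2 : ¬ (Function.Injective f ∧ x ∈ univ.image f) := fun h => hf h.1
      rw [if_neg hf, if_neg hf, if_neg hmem2, sub_zero, zero_div]
  have hle : beta μ' m ≤ beta μ m := (beta_le_betaSup m (by omega) hprob).trans_eq hopt.symm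
  rw [beta_eq, beta_eq] at hle
  have hden : (0:ℝ) < 2 * (m:ℝ) := by
    have : (0:ℝ) < (m:ℝ) := by exact_mod_cast (by omega : 0 < m)
    linarith
  have hSS : S μ' m ≤ S μ m := by
    have := (div_le_div_iff_of_pos_right hden).mp hle
    exact this
  rw [hS'] at hSS
  have hp : (0:ℝ) < (1 - d) ^ m := by positivity
  calc S μ m - Sx μ m x = ((S μ m - Sx μ m x) / (1 - d) ^ m) * (1 - d) ^ m := by
        field_simp
    _ ≤ S μ m * (1 - d) ^ m := mul_le_mul_of_nonneg_right hSS (le_of_lt hp)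
    _ = (1 - d) ^ m * S μ m := mul_comm _ _

/-- The numeric inequality. -/
lemma numeric {s : ℝ} (hs : 0 < s) (h : 1 - Real.exp (-s) ≤ s / 2) : 1.593 < s := by
  by_contra hle
  push_neg at hle
  have hc : (0:ℝ) < 1.593 := by norm_num
  have ha' : (0:ℝ) ≤ s / 1.593 := by positivity
  have hb' : (0:ℝ) ≤ 1 - s / 1.593 := by
    rw [sub_nonneg, div_le_one hc]; exact hle
  have hab : s / 1.593 + (1 - s / 1.593) = 1 := by ring
  have hconv := convexOn_exp.2 (Set.mem_univ (-(1.593:ℝ))) (Set.mem_univ (0:ℝ)) ha' hb' hab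
  have harg : (s / 1.593) • (-(1.593:ℝ)) + (1 - s / 1.593) • (0:ℝ) = -s := by
    rw [smul_eq_mul, smul_eq_mul, mul_zero, add_zero]
    field_simp
  rw [harg] at hconv
  rw [smul_eq_mul, smul_eq_mul, Real.exp_zero, mul_one] at hconv
  -- hconv : exp (-s) ≤ s/1.593 * exp (-1.593) + (1 - s/1.593)
  have h3 : 1 - s / 2 ≤ Real.exp (-s) := by linarith
  have h4 : s / 1.593 - s / 2 ≤ (s / 1.593) * Real.exp (-(1.593:ℝ)) := by linarith
  have h5 : (0:ℝ) < s / 1.593 := by positivity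
  have h6 : s / 1.593 - s / 2 = (s / 1.593) * (1 - 1.593 / 2) := by
    field_simp
  rw [h6] at h4
  have hE : 1 - (1.593:ℝ) / 2 ≤ Real.exp (-(1.593:ℝ)) :=
    le_of_mul_le_mul_left h4 h5
  have hexp_lb : (4.916 : ℝ) < Real.exp 1.593 := by
    have h8 := Real.sum_le_exp_of_nonneg (le_of_lt hc) 8
    have h9 : (4.916:ℝ) < ∑ i ∈ Finset.range 8, (1.593:ℝ) ^ i / i.factorial := by
      simp only [Finset.sum_range_succ, Finset.sum_range_zero, Nat.factorial]
      norm_num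
    linarith
  rw [Real.exp_neg] at hE
  have hinvlt : (Real.exp 1.593)⁻¹ < (4.916:ℝ)⁻¹ := by
    apply inv_strictAnti₀ (by norm_num) hexp_lb
  have : (1:ℝ) - 1.593 / 2 > (4.916:ℝ)⁻¹ := by norm_num
  linarith

end OptAux

/-- For every `m ≥ 3` and `μ ∈ Opt(m)`: `μ̄(x) > 1.593/m` for every `x ∈ supp μ̄`, hence
`|supp μ̄| < 1.256·m`. -/
theorem opt_general (m : ℕ) (hm : 3 ≤ m) {X : Type*} [Fintype X] [DecidableEq X]
    (μ : Sym2 X → ℝ) (hμ : IsProbMass μ) (hopt : beta μ m = betaSup m) :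
    (∀ x : X, 0 < wdeg μ x → 1.593 / m < wdeg μ x) ∧
    ({x : X | 0 < wdeg μ x}.ncard : ℝ) < 1.256 * m := by
  have hmR : (0:ℝ) < (m:ℝ) := by exact_mod_cast (by omega : 0 < m)
  have hmain : ∀ x : X, 0 < wdeg μ x → 1.593 / m < wdeg μ x := by
    intro x hx
    by_cases hd1 : wdeg μ x < 1
    · have hS := OptAux.S_pos m hm hμ hopt
      have hSx := OptAux.Sx_eq m hm hμ hopt x
      have hdel := OptAux.deletion m hm hμ hopt x hd1
      have h1 : 1 - (1 - wdeg μ x) ^ m ≤ (m:ℝ) * wdeg μ x / 2 := by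
        nlinarith [hS, hSx, hdel]
      have h2 : (1 - wdeg μ x) ^ m ≤ Real.exp (-((m:ℝ) * wdeg μ x)) := by
        have he := Real.add_one_le_exp (-(wdeg μ x))
        calc (1 - wdeg μ x) ^ m ≤ (Real.exp (-(wdeg μ x))) ^ m := by
              apply pow_le_pow_left₀ (by linarith) (by linarith) m
          _ = Real.exp (-((m:ℝ) * wdeg μ x)) := by
              rw [← Real.exp_nat_mul]
              congr 1
              ring
      have h3 : 1 - Real.exp (-((m:ℝ) * wdeg μ x)) ≤ ((m:ℝ) * wdeg μ x) / 2 := by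
        linarith
      have h4 : (1.593:ℝ) < (m:ℝ) * wdeg μ x := OptAux.numeric (by positivity) h3
      rw [div_lt_iff₀ hmR]
      linarith [h4, mul_comm (wdeg μ x) ((m:ℝ))]
    · push_neg at hd1
      have hc3 : (3:ℝ) ≤ (m:ℝ) := by exact_mod_cast hm
      have hdiv : 1.593 / (m:ℝ) ≤ 0.531 := by
        rw [div_le_iff₀ hmR]
        linarith
      linarith
  refine ⟨hmain, ?_⟩
  have hfin : {x : X | 0 < wdeg μ x} = ↑(Finset.univ.filter fun x : X => 0 < wdeg μ x) := by
    ext y; simp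
  rw [hfin, Set.ncard_coe_finset]
  set F := Finset.univ.filter fun x : X => 0 < wdeg μ x with hF
  rcases Finset.eq_empty_or_nonempty F with hFe | hFne
  · rw [hFe]
    simp only [Finset.card_empty, Nat.cast_zero]
    nlinarith [hmR]
  · have hlt : (F.card : ℝ) * (1.593 / m) < ∑ x ∈ F, wdeg μ x := by
      have hstep := Finset.sum_lt_sum_of_nonempty hFne
        (f := fun _ : X => 1.593/(m:ℝ)) (g := fun x => wdeg μ x) ?_
      · rw [Finset.sum_const, nsmul_eq_mul] at hstep
        exact hstep
      · intro x hxF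
        exact hmain x (Finset.mem_filter.mp hxF).2
    have hsum2 : ∑ x ∈ F, wdeg μ x ≤ 2 := by
      rw [← OptAux.sum_wdeg hμ]
      apply Finset.sum_le_sum_of_subset_of_nonneg (Finset.subset_univ F)
      intro y _ _
      exact OptAux.wdeg_nonneg hμ y
    have hcard2 : (F.card:ℝ) * (1.593 / m) < 2 := lt_of_lt_of_le hlt hsum2
    have hmul : (F.card:ℝ) * 1.593 < 2 * m := by
      have hstep2 := mul_lt_mul_of_pos_right hcard2 hmR
      calc (F.card:ℝ) * 1.593 = (F.card:ℝ) * (1.593 / m) * m := by field_simp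
        _ < 2 * m := hstep2
    linarith [hmul, hmR]
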